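/- Let p be an odd prime, let s ≥ 2 and h ≥ 2 be integers, and let G = (ℤ_{2p^s})^h. Let m ≥ 1 and let y_1, …, y_m ∈ ℤ_{2p^s} be such that p does not divide the representative of y_i in {0,…,2p^s−1} for each i (equivalently, each y_i maps to a nonzero element under the natural projection ℤ_{2p^s} → ℤ_p), and let S = {(y_i, 0, …, 0), (−y_i, 0, …, 0) : 1 ≤ i ≤ m} ⊆ G (nonzero entry in the first coordinate only). Then for all a, b ∈ G with b − a = (p^s, 0, …, 0), the complement of Cay(G, S), namely Cay(G, G \ (S ∪ {0})), does not exhibit PGST between a and b. -/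

import Mathlib

open Matrix Filter

/-- Adjacency matrix of the Cayley graph `Cay(G,S)`: `A x y = 1` iff `x - y ∈ S`. -/
noncomputable def cayAdj {G : Type*} [AddCommGroup G] [Fintype G] [DecidableEq G]
    (S : Finset G) : Matrix G G ℂ :=
  Matrix.of fun x y => if x - y ∈ S then 1 else 0

/-- Transition matrix `H(t) = exp(-i t A)` of the Cayley graph `Cay(G,S)`. -/
noncomputable def cayH {G : Type*} [AddCommGroup G] [Fintype G] [DecidableEq G]
    (S : Finset G) (t : ℝ) : Matrix G G ℂ :=
  NormedSpace.exp ((-(Complex.I * (t : ℂ))) • cayAdj S)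

/-- `Cay(G,S)` exhibits pretty good fractional revival (PGFR) between `a` and `b`. -/
def ExhibitsPGFR {G : Type*} [AddCommGroup G] [Fintype G] [DecidableEq G]
    (S : Finset G) (a b : G) : Prop :=
  ∃ (α β : ℂ) (t : ℕ → ℝ), β ≠ 0 ∧ ‖α‖ ^ 2 + ‖β‖ ^ 2 = 1 ∧
    Tendsto (fun k => (cayH S (t k)).mulVec ((Pi.single a 1 : G → ℂ))) atTop
      (nhds (α • (Pi.single a 1 : G → ℂ) + β • (Pi.single b 1 : G → ℂ)))

/-- `Cay(G,S)` exhibits fractional revival (FR) between `a` and `b`. -/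
def ExhibitsFR {G : Type*} [AddCommGroup G] [Fintype G] [DecidableEq G]
    (S : Finset G) (a b : G) : Prop :=
  ∃ (t : ℝ), 0 < t ∧ ∃ α β : ℂ, β ≠ 0 ∧ ‖α‖ ^ 2 + ‖β‖ ^ 2 = 1 ∧
    (cayH S t).mulVec ((Pi.single a 1 : G → ℂ)) =
      α • (Pi.single a 1 : G → ℂ) + β • (Pi.single b 1 : G → ℂ)

/-- `Cay(G,S)` exhibits pretty good state transfer (PGST) between `a` and `b`. -/
def ExhibitsPGST {G : Type*} [AddCommGroup G] [Fintype G] [DecidableEq G]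
    (S : Finset G) (a b : G) : Prop :=
  ∃ (β : ℂ) (t : ℕ → ℝ), ‖β‖ = 1 ∧
    Tendsto (fun k => (cayH S (t k)).mulVec ((Pi.single a 1 : G → ℂ))) atTop
      (nhds (β • (Pi.single b 1 : G → ℂ)))

/-- The eigenvalue `λ_r = Σ_{y ∈ S} exp(2πi r y / n)` of the circulant graph `Cay(ℤ_n, S)`. -/
noncomputable def circEig (n : ℕ) [NeZero n] (S : Finset (ZMod n)) (r : ℕ) : ℂ :=
  ∑ y ∈ S, Complex.exp (2 * Real.pi * Complex.I * r * y.val / n)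


noncomputable def Efun (n : ℕ) (k : ℕ) : ℂ :=
  Complex.exp (2 * Real.pi * Complex.I * k / n)

lemma Efun_add (n : ℕ) (k l : ℕ) : Efun n (k + l) = Efun n k * Efun n l := by
  rw [Efun, Efun, Efun, ← Complex.exp_add]
  congr 1
  push_cast
  ring

lemma Efun_nat_mul_self (n : ℕ) [NeZero n] (q : ℕ) : Efun n (n * q) = 1 := by
  have hn : (n : ℂ) ≠ 0 := Nat.cast_ne_zero.mpr (NeZero.ne n)
  rw [Efun]
  have : (2 * (Real.pi : ℂ) * Complex.I * (n * q : ℕ)) / n = (q : ℤ) * (2 * Real.pi * Complex.I) := by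
    push_cast
    field_simp
  rw [this, Complex.exp_int_mul_two_pi_mul_I]

lemma Efun_mod (n : ℕ) [NeZero n] (k : ℕ) : Efun n (k % n) = Efun n k := by
  conv_rhs => rw [show k = n * (k / n) + k % n from (Nat.div_add_mod k n).symm]
  rw [Efun_add, Efun_nat_mul_self, one_mul]

lemma Efun_pow (n : ℕ) (k j : ℕ) : Efun n k ^ j = Efun n (k * j) := by
  induction j with
  | zero => simp [Efun]
  | succ j ih => rw [pow_succ, ih, mul_add, Efun_add, mul_one]

lemma Efun_ne_one (n : ℕ) [NeZero n] {k : ℕ} (h0 : 0 < k) (hk : k < n) : Efun n k ≠ 1 := by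
  intro h
  rw [Efun, Complex.exp_eq_one_iff] at h
  obtain ⟨q, hq⟩ := h
  have hn : (n : ℂ) ≠ 0 := Nat.cast_ne_zero.mpr (NeZero.ne n)
  have hpi : (2 * (Real.pi : ℂ) * Complex.I) ≠ 0 := by
    simp [Real.pi_ne_zero, Complex.I_ne_zero, Complex.ofReal_ne_zero]
  rw [div_eq_iff hn] at hq
  have h1 : (k : ℂ) * (2 * Real.pi * Complex.I) = ((q : ℂ) * n) * (2 * Real.pi * Complex.I) := by
    linear_combination hq
  have hkc : (k : ℂ) = (q : ℂ) * n := mul_right_cancel₀ hpi h1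
  have hkz : (k : ℤ) = q * n := by exact_mod_cast hkc
  have hdvd : (n : ℤ) ∣ (k : ℤ) := ⟨q, by rw [hkz]; ring⟩
  have hdvd' : n ∣ k := Int.natCast_dvd_natCast.mp hdvd
  have := Nat.le_of_dvd h0 hdvd'
  omega

lemma Efun_eq_one_of_dvd (n : ℕ) [NeZero n] {k : ℕ} (h : n ∣ k) : Efun n k = 1 := by
  rw [← Efun_mod, (Nat.mod_eq_zero_of_dvd h : k % n = 0)]
  simp [Efun]

noncomputable def efun (n : ℕ) [NeZero n] (z : ZMod n) : ℂ := Efun n z.val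

lemma efun_natCast (n : ℕ) [NeZero n] (k : ℕ) : efun n (k : ZMod n) = Efun n k := by
  rw [efun, ZMod.val_natCast, Efun_mod]

lemma efun_add (n : ℕ) [NeZero n] (z w : ZMod n) : efun n (z + w) = efun n z * efun n w := by
  have hz : ((z.val : ℕ) : ZMod n) = z := by simp [ZMod.natCast_val, ZMod.cast_id]
  have hw : ((w.val : ℕ) : ZMod n) = w := by simp [ZMod.natCast_val, ZMod.cast_id]
  calc efun n (z + w) = efun n (((z.val + w.val : ℕ) : ZMod n)) := by rw [Nat.cast_add, hz, hw]
    _ = Efun n (z.val + w.val) := efun_natCast n _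
    _ = efun n z * efun n w := by rw [Efun_add, efun, efun]

lemma efun_zero (n : ℕ) [NeZero n] : efun n 0 = 1 := by
  simp [efun, Efun]

lemma efun_ne_zero (n : ℕ) [NeZero n] (z : ZMod n) : efun n z ≠ 0 := Complex.exp_ne_zero _


section VecMulExp
attribute [local instance] Matrix.linftyOpNormedRing Matrix.linftyOpNormedAlgebra

lemma vecMul_pow_eig {G : Type*} [Fintype G] [DecidableEq G] (M : Matrix G G ℂ)
    (v : G → ℂ) (μ : ℂ) (h : Matrix.vecMul v M = μ • v) (k : ℕ) :
    Matrix.vecMul v (M ^ k) = μ ^ k • v := by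
  induction k with
  | zero => simp [Matrix.vecMul_one]
  | succ k ih =>
    rw [pow_succ, ← Matrix.vecMul_vecMul, ih, Matrix.smul_vecMul, h, pow_succ, mul_smul]

lemma vecMul_exp_eig {G : Type*} [Fintype G] [DecidableEq G] (M : Matrix G G ℂ)
    (v : G → ℂ) (μ : ℂ) (h : Matrix.vecMul v M = μ • v) :
    Matrix.vecMul v (NormedSpace.exp M) = NormedSpace.exp μ • v := by
  classical
  let L : Matrix G G ℂ →ₗ[ℂ] (G → ℂ) :=
    { toFun := fun N => Matrix.vecMul v N
      map_add' := fun A B => by simp [Matrix.vecMul_add]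
      map_smul' := fun c A => by
        ext y
        simp [Matrix.vecMul, dotProduct, Finset.mul_sum, mul_left_comm] }
  let L' : Matrix G G ℂ →L[ℂ] (G → ℂ) := LinearMap.toContinuousLinearMap L
  have hsum : Summable fun k : ℕ => ((Nat.factorial k : ℂ))⁻¹ • M ^ k :=
    NormedSpace.expSeries_summable' M
  have h1 : Matrix.vecMul v (NormedSpace.exp M) = L' (NormedSpace.exp M) := rfl
  rw [h1, NormedSpace.exp_eq_tsum ℂ, L'.map_tsum hsum]
  have h2 : ∀ k : ℕ, L' (((Nat.factorial k : ℂ))⁻¹ • M ^ k) = (((Nat.factorial k : ℂ))⁻¹ * μ ^ k) • v := by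
    intro k
    have hk : L' (M ^ k) = μ ^ k • v := vecMul_pow_eig M v μ h k
    rw [_root_.map_smul, hk, smul_smul]
  simp_rw [h2]
  have hsμ : Summable fun k : ℕ => ((Nat.factorial k : ℂ))⁻¹ * μ ^ k := by
    simpa [smul_eq_mul] using NormedSpace.expSeries_summable' (𝕂 := ℂ) μ
  rw [hsμ.tsum_smul_const, NormedSpace.exp_eq_tsum ℂ]
  simp [smul_eq_mul]

end VecMulExp

lemma vecMul_smul_mat {G : Type*} [Fintype G] (c : ℂ) (A : Matrix G G ℂ) (v : G → ℂ) :
    Matrix.vecMul v (c • A) = c • Matrix.vecMul v A := by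
  ext y
  simp [Matrix.vecMul, dotProduct, Finset.mul_sum, mul_left_comm]

lemma vecMul_cayAdj {G : Type*} [AddCommGroup G] [Fintype G] [DecidableEq G]
    (S : Finset G) (χ : G → ℂ) (hχ : ∀ x y, χ (x + y) = χ x * χ y) :
    Matrix.vecMul χ (cayAdj S) = (∑ z ∈ S, χ z) • χ := by
  ext y
  have h1 : Matrix.vecMul χ (cayAdj S) y
      = ∑ x : G, χ x * (if x - y ∈ S then 1 else 0) := by
    simp [Matrix.vecMul, dotProduct, cayAdj]
  rw [h1]
  have h2 : ∀ z : G, χ (y + z) * (if (y + z) - y ∈ S then (1:ℂ) else 0)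
      = χ y * (if z ∈ S then χ z else 0) := by
    intro z
    rw [add_sub_cancel_left, hχ]
    by_cases hz : z ∈ S <;> simp [hz]
  calc ∑ x : G, χ x * (if x - y ∈ S then (1:ℂ) else 0)
      = ∑ z : G, χ (y + z) * (if (y + z) - y ∈ S then (1:ℂ) else 0) :=
        (Equiv.sum_comp (Equiv.addLeft y) fun x => χ x * (if x - y ∈ S then (1:ℂ) else 0)).symm
    _ = ∑ z : G, χ y * (if z ∈ S then χ z else 0) := by simp_rw [h2]
    _ = χ y * ∑ z ∈ S, χ z := by rw [← Finset.mul_sum, Finset.sum_ite_mem, Finset.univ_inter]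
    _ = ((∑ z ∈ S, χ z) • χ) y := by simp [mul_comm]

lemma vecMul_cayH {G : Type*} [AddCommGroup G] [Fintype G] [DecidableEq G]
    (S : Finset G) (χ : G → ℂ) (hχ : ∀ x y, χ (x + y) = χ x * χ y) (t : ℝ) :
    Matrix.vecMul χ (cayH S t) =
      Complex.exp ((-(Complex.I * (t : ℂ))) * (∑ z ∈ S, χ z)) • χ := by
  rw [cayH, Complex.exp_eq_exp_ℂ]
  apply vecMul_exp_eig
  rw [vecMul_smul_mat, vecMul_cayAdj S χ hχ, smul_smul]

lemma pgst_char {G : Type*} [AddCommGroup G] [Fintype G] [DecidableEq G]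
    (S : Finset G) (a b : G) (β : ℂ) (t : ℕ → ℝ)
    (htend : Tendsto (fun k => (cayH S (t k)).mulVec ((Pi.single a 1 : G → ℂ))) atTop
      (nhds (β • (Pi.single b 1 : G → ℂ))))
    (χ : G → ℂ) (hχ : ∀ x y, χ (x + y) = χ x * χ y) (hne : ∀ x, χ x ≠ 0) :
    Tendsto (fun k => Complex.exp ((-(Complex.I * (t k : ℂ))) * (∑ z ∈ S, χ z))) atTop
      (nhds (β * χ b * (χ a)⁻¹)) := by
  have hcont : Continuous fun f : G → ℂ => dotProduct χ f := by
    unfold dotProduct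
    exact continuous_finset_sum _ fun x _ => (continuous_const.mul (continuous_apply x))
  have h1 : Tendsto (fun k => dotProduct χ ((cayH S (t k)).mulVec (Pi.single a 1)))
      atTop (nhds (dotProduct χ (β • (Pi.single b 1 : G → ℂ)))) :=
    (hcont.tendsto _).comp htend
  have h2 : ∀ k, dotProduct χ ((cayH S (t k)).mulVec (Pi.single a 1))
      = Complex.exp ((-(Complex.I * (t k : ℂ))) * (∑ z ∈ S, χ z)) * χ a := by
    intro k
    rw [dotProduct_mulVec, vecMul_cayH S χ hχ]
    simp [dotProduct, Pi.single_apply, mul_comm]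
  have h3 : dotProduct χ (β • (Pi.single b 1 : G → ℂ)) = β * χ b := by
    simp [dotProduct, Pi.single_apply, mul_comm]
  rw [h3] at h1
  simp_rw [h2] at h1
  have h4 := h1.mul_const ((χ a)⁻¹)
  simp_rw [mul_assoc, mul_inv_cancel₀ (hne a), mul_one] at h4
  exact (mul_assoc β (χ b) (χ a)⁻¹) ▸ h4

theorem stmt_17 (p s h n : ℕ) [NeZero n] (hp : p.Prime) (hpodd : Odd p)
    (hs : 2 ≤ s) (hh : 2 ≤ h) (hn : n = 2 * p ^ s)
    (m : ℕ) (hm : 1 ≤ m) (y : Fin m → ZMod n) (hyp : ∀ i, ¬ p ∣ (y i).val) :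
    ∀ a b : Fin h → ZMod n,
      b - a = Pi.single (⟨0, by omega⟩ : Fin h) ((p ^ s : ℕ) : ZMod n) →
      ¬ ExhibitsPGST
          (Finset.univ \
            (((Finset.univ.image fun i => Pi.single (⟨0, by omega⟩ : Fin h) (y i)) ∪
              (Finset.univ.image fun i => Pi.single (⟨0, by omega⟩ : Fin h) (-(y i)))) ∪ {0}))
          a b := by
  intro a b hab hP
  obtain ⟨β, t, hβ, htend⟩ := hP
  classical
  have hp2 : 2 ≤ p := hp.two_le
  have hs1 : 1 ≤ s := by omega
  have hps0 : 0 < p ^ s := Nat.pow_pos (by omega)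
  have hpsn : p ^ s < n := by
    rw [hn]; omega
  have hn2 : 2 ≤ n := by
    rw [hn]; omega
  set j0 : Fin h := (⟨0, by omega⟩ : Fin h) with hj0def
  set j1 : Fin h := (⟨1, by omega⟩ : Fin h) with hj1def
  have hj01 : j0 ≠ j1 := by
    simp [hj0def, hj1def, Fin.ext_iff]
  set Δ : ℕ := 2 * p ^ (s - 1) with hΔdef
  have hnΔ : n = Δ * p := by
    rw [hn, hΔdef, mul_assoc, ← pow_succ]
    congr 2
    omega
  have hΔeven : Δ % 2 = 0 := by omega
  set T0 : Finset (Fin h → ZMod n) :=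
    (((Finset.univ.image fun i => Pi.single j0 (y i)) ∪
        (Finset.univ.image fun i => Pi.single j0 (-(y i)))) ∪ {0}) with hT0def
  set S' : Finset (Fin h → ZMod n) := Finset.univ \ T0 with hS'def
  -- characters
  set r : ℕ → (Fin h → ZMod n) := fun c => Pi.single j0 ((c : ZMod n)) + Pi.single j1 1
    with hrdef
  set χ : ℕ → (Fin h → ZMod n) → ℂ := fun c x => efun n (∑ j, r c j * x j) with hχdef
  set lam : ℕ → ℂ := fun c => ∑ z ∈ S', χ c z with hlamdef
  have hrj0 : ∀ c, r c j0 = (c : ZMod n) := by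
    intro c
    simp [hrdef, Pi.single_eq_of_ne hj01]
  have hrj1 : ∀ c, r c j1 = 1 := by
    intro c
    simp [hrdef, Pi.single_eq_of_ne hj01.symm]
  have hχadd : ∀ c x x', χ c (x + x') = χ c x * χ c x' := by
    intro c x x'
    have : (∑ j, r c j * (x + x') j) = (∑ j, r c j * x j) + (∑ j, r c j * x' j) := by
      rw [← Finset.sum_add_distrib]
      exact Finset.sum_congr rfl fun j _ => by simp [mul_add]
    rw [hχdef]
    simp only []
    rw [this, efun_add]
  have hχne : ∀ c x, χ c x ≠ 0 := fun c x => efun_ne_zero n _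
  have hχsingle : ∀ c (w : ZMod n), χ c (Pi.single j0 w) = efun n ((c : ZMod n) * w) := by
    intro c w
    rw [hχdef]
    simp only []
    congr 1
    rw [Fintype.sum_eq_single j0 (fun j hj => by rw [Pi.single_eq_of_ne hj, mul_zero])]
    rw [Pi.single_eq_same, hrj0]
  -- limits
  have hlim : ∀ c : ℕ, Tendsto (fun k => Complex.exp ((-(Complex.I * (t k : ℂ))) * lam c))
      atTop (nhds (β * Efun n (c * p ^ s))) := by
    intro c
    have h1 := pgst_char S' a b β t htend (χ c) (hχadd c) (hχne c)
    have h2 : β * χ c b * (χ c a)⁻¹ = β * Efun n (c * p ^ s) := by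
      have hb : b = a + (b - a) := by ring
      have h3 : χ c b = χ c a * χ c (b - a) := by
        conv_lhs => rw [hb]
        exact hχadd c a (b - a)
      have h4 : χ c (b - a) = Efun n (c * p ^ s) := by
        rw [hab, hχsingle]
        rw [show ((c : ZMod n) * ((p ^ s : ℕ) : ZMod n)) = (((c * p ^ s : ℕ)) : ZMod n) by
          push_cast; ring]
        exact efun_natCast n _
      rw [h3, h4, mul_inv_eq_iff_eq_mul₀ (hχne c a)]
      ring
    rw [← h2]
    exact h1
  -- parity values
  have hodd : ∀ c : ℕ, c % 2 = 1 → Efun n (c * p ^ s) = -1 := by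
    intro c hc
    obtain ⟨e, he⟩ : ∃ e, c = 2 * e + 1 := ⟨c / 2, by omega⟩
    have h1 : c * p ^ s = p ^ s + e * n := by
      rw [he, hn]; ring
    rw [h1, ← Efun_mod, Nat.add_mul_mod_self_right, Nat.mod_eq_of_lt hpsn]
    rw [Efun]
    have harg : 2 * (Real.pi : ℂ) * Complex.I * (p ^ s : ℕ) / (n : ℕ) =
        Real.pi * Complex.I := by
      rw [hn]
      have : ((p : ℂ)) ^ s ≠ 0 := pow_ne_zero s (by exact_mod_cast hp.pos.ne')
      push_cast
      field_simp
    rw [harg, Complex.exp_pi_mul_I]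
  have heven : ∀ c : ℕ, c % 2 = 0 → Efun n (c * p ^ s) = 1 := by
    intro c hc
    obtain ⟨e, he⟩ : ∃ e, c = 2 * e := ⟨c / 2, by omega⟩
    exact Efun_eq_one_of_dvd n ⟨e, by rw [he, hn]; ring⟩
  -- vanishing of full character sums
  have hsum0 : ∀ c : ℕ, ∑ z : Fin h → ZMod n, χ c z = 0 := by
    intro c
    set z0 : Fin h → ZMod n := Pi.single j1 1 with hz0def
    have hχz0 : χ c z0 = Efun n 1 := by
      rw [hz0def, hχdef]
      simp only []
      rw [Fintype.sum_eq_single j1 (fun j hj => by rw [Pi.single_eq_of_ne hj, mul_zero]),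
        Pi.single_eq_same, hrj1, mul_one, show (1 : ZMod n) = ((1 : ℕ) : ZMod n) by push_cast; rfl,
        efun_natCast]
    have hkey : (∑ z : Fin h → ZMod n, χ c z) * χ c z0 = ∑ z : Fin h → ZMod n, χ c z := by
      rw [Finset.sum_mul]
      calc ∑ z : Fin h → ZMod n, χ c z * χ c z0
          = ∑ z : Fin h → ZMod n, χ c (z + z0) := by
            exact Finset.sum_congr rfl fun z _ => (hχadd c z z0).symm
        _ = ∑ z : Fin h → ZMod n, χ c z := Equiv.sum_comp (Equiv.addRight z0) (χ c)
    have hne1 : χ c z0 - 1 ≠ 0 := by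
      rw [hχz0]
      exact sub_ne_zero.mpr (Efun_ne_one n (by omega) (by omega))
    have : (∑ z : Fin h → ZMod n, χ c z) * (χ c z0 - 1) = 0 := by
      rw [mul_sub, hkey, mul_one, sub_self]
    rcases mul_eq_zero.mp this with h' | h'
    · exact h'
    · exact absurd h' hne1
  -- geometric vanishing
  haveI : NeZero p := ⟨hp.pos.ne'⟩
  have hgeo : ∀ (w : ZMod n), ¬ p ∣ w.val →
      ∀ c : ℕ, ∑ j ∈ Finset.range p, efun n (((c + Δ * j : ℕ) : ZMod n) * w) = 0 := by
    intro w hw c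
    have hφ : ∀ k : ℕ, efun n (((k : ℕ) : ZMod n) * w) = Efun n (k * w.val) := by
      intro k
      rw [show ((k : ZMod n) * w) = (((k * w.val : ℕ)) : ZMod n) by
        push_cast [ZMod.natCast_val, ZMod.cast_id]; ring]
      exact efun_natCast n _
    set ζ : ℂ := Efun n (Δ * w.val) with hζdef
    have hζp : ζ ^ p = 1 := by
      rw [hζdef, Efun_pow]
      exact Efun_eq_one_of_dvd n ⟨w.val, by rw [show Δ * w.val * p = Δ * p * w.val from by ring, ← hnΔ]⟩
    have hζ1 : ζ ≠ 1 := by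
      have harg : ζ = Efun p w.val := by
        rw [hζdef, Efun, Efun]
        congr 1
        have hΔ0 : ((Δ : ℂ)) ≠ 0 := by
          have : 0 < Δ := by positivity
          exact_mod_cast this.ne'
        have hp0 : ((p : ℂ)) ≠ 0 := by exact_mod_cast hp.pos.ne'
        have hNc : ((n : ℕ) : ℂ) = (Δ : ℂ) * (p : ℂ) := by rw [hnΔ]; push_cast; ring
        rw [hNc]
        push_cast
        field_simp
      rw [harg, ← Efun_mod]
      have h1 : w.val % p ≠ 0 := fun hc => hw (Nat.dvd_of_mod_eq_zero hc)
      exact Efun_ne_one p (by omega) (Nat.mod_lt _ hp.pos)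
    calc ∑ j ∈ Finset.range p, efun n (((c + Δ * j : ℕ) : ZMod n) * w)
        = ∑ j ∈ Finset.range p, Efun n (c * w.val) * ζ ^ j := by
          refine Finset.sum_congr rfl fun j _ => ?_
          rw [hφ, show (c + Δ * j) * w.val = c * w.val + Δ * w.val * j from by ring,
            Efun_add, hζdef, Efun_pow]
      _ = Efun n (c * w.val) * ∑ j ∈ Finset.range p, ζ ^ j := by rw [Finset.mul_sum]
      _ = 0 := by
          rw [geom_sum_eq hζ1, hζp, sub_self, zero_div, mul_zero]
  -- membership decomposition
  have hmem : ∀ z ∈ T0, z = 0 ∨ ∃ w : ZMod n, ¬ p ∣ w.val ∧ z = Pi.single j0 w := by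
    intro z hz
    rw [hT0def, Finset.mem_union, Finset.mem_union] at hz
    have hpn : p ∣ n := by
      rw [hn]
      exact Dvd.dvd.mul_left (dvd_pow_self p (by omega)) 2
    rcases hz with (hz | hz) | hz
    · obtain ⟨i, _, hi⟩ := Finset.mem_image.mp hz
      exact Or.inr ⟨y i, hyp i, hi.symm⟩
    · obtain ⟨i, _, hi⟩ := Finset.mem_image.mp hz
      refine Or.inr ⟨-(y i), ?_, hi.symm⟩
      have hyne : y i ≠ 0 := by
        intro hc
        exact hyp i (hc ▸ by simp)
      rw [ZMod.neg_val, if_neg hyne]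
      intro hc
      have hvle : (y i).val ≤ n := le_of_lt ((y i).val_lt)
      have : p ∣ (y i).val := by
        have := Nat.dvd_sub hpn hc
        rwa [Nat.sub_sub_self hvle] at this
      exact hyp i this
    · exact Or.inl (Finset.mem_singleton.mp hz)
  -- the key sum identity
  have hzero_mem : (0 : Fin h → ZMod n) ∈ T0 := by
    rw [hT0def]
    exact Finset.mem_union_right _ (Finset.mem_singleton_self 0)
  have hkeysum : ∀ c : ℕ, ∑ j ∈ Finset.range p, lam (c + Δ * j) = -(p : ℂ) := by
    intro c
    have hlamT : ∀ c' : ℕ, lam c' = -∑ z ∈ T0, χ c' z := by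
      intro c'
      rw [hlamdef]
      simp only []
      rw [hS'def, Finset.sum_sdiff_eq_sub (Finset.subset_univ T0), hsum0, zero_sub]
    calc ∑ j ∈ Finset.range p, lam (c + Δ * j)
        = -∑ j ∈ Finset.range p, ∑ z ∈ T0, χ (c + Δ * j) z := by
          rw [← Finset.sum_neg_distrib]
          exact Finset.sum_congr rfl fun j _ => hlamT _
      _ = -∑ z ∈ T0, ∑ j ∈ Finset.range p, χ (c + Δ * j) z := by rw [Finset.sum_comm]
      _ = -∑ z ∈ T0, (if z = 0 then (p : ℂ) else 0) := by
          congr 1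
          refine Finset.sum_congr rfl fun z hz => ?_
          rcases hmem z hz with hz0 | ⟨w, hw, hzw⟩
          · rw [if_pos hz0, hz0]
            have : ∀ c' : ℕ, χ c' (0 : Fin h → ZMod n) = 1 := by
              intro c'
              rw [hχdef]
              simp only []
              rw [show (∑ j, r c' j * (0 : Fin h → ZMod n) j) = 0 by simp]
              exact efun_zero n
            simp only [this]
            rw [Finset.sum_const, Finset.card_range, nsmul_eq_mul, mul_one]
          · have hz0 : z ≠ 0 := by
              intro hc
              apply hw
              have : w = 0 := by
                have := congrFun (hc ▸ hzw : (0 : Fin h → ZMod n) = Pi.single j0 w) j0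
                rw [Pi.single_eq_same] at this
                exact this.symm
              simp [this]
            rw [if_neg hz0]
            calc ∑ j ∈ Finset.range p, χ (c + Δ * j) z
                = ∑ j ∈ Finset.range p, efun n (((c + Δ * j : ℕ) : ZMod n) * w) := by
                  refine Finset.sum_congr rfl fun j _ => ?_
                  rw [hzw, hχsingle]
              _ = 0 := hgeo w hw c
      _ = -(p : ℂ) := by rw [Finset.sum_ite_eq' T0 0 (fun _ => (p : ℂ)), if_pos hzero_mem]
  -- final contradiction
  have hβ0 : β ≠ 0 := by
    intro hc
    rw [hc] at hβ
    simp at hβ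
  have hexp_eq : ∀ k, (∏ j ∈ Finset.range p,
        Complex.exp ((-(Complex.I * (t k : ℂ))) * lam (1 + Δ * j)))
      = ∏ j ∈ Finset.range p,
        Complex.exp ((-(Complex.I * (t k : ℂ))) * lam (0 + Δ * j)) := by
    intro k
    rw [← Complex.exp_sum, ← Complex.exp_sum, ← Finset.mul_sum, ← Finset.mul_sum,
      hkeysum 1, hkeysum 0]
  have hodd' : ∀ j : ℕ, Efun n ((1 + Δ * j) * p ^ s) = -1 := by
    intro j
    refine hodd _ ?_
    rw [hΔdef, mul_assoc, Nat.add_mul_mod_self_left]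
  have heven' : ∀ j : ℕ, Efun n ((0 + Δ * j) * p ^ s) = 1 := by
    intro j
    refine heven _ ?_
    rw [hΔdef, mul_assoc, Nat.add_mul_mod_self_left]
  have htend1 : Tendsto (fun k => ∏ j ∈ Finset.range p,
      Complex.exp ((-(Complex.I * (t k : ℂ))) * lam (1 + Δ * j))) atTop
      (nhds ((-β) ^ p)) := by
    have := tendsto_finset_prod (Finset.range p)
      (fun j _ => hlim (1 + Δ * j))
    convert this using 2
    have : ∀ j ∈ Finset.range p, β * Efun n ((1 + Δ * j) * p ^ s) = -β := by
      intro j _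
      rw [hodd' j]; ring
    rw [Finset.prod_congr rfl this, Finset.prod_const, Finset.card_range]
  have htend0 : Tendsto (fun k => ∏ j ∈ Finset.range p,
      Complex.exp ((-(Complex.I * (t k : ℂ))) * lam (0 + Δ * j))) atTop
      (nhds (β ^ p)) := by
    have := tendsto_finset_prod (Finset.range p)
      (fun j _ => hlim (0 + Δ * j))
    convert this using 2
    have : ∀ j ∈ Finset.range p, β * Efun n ((0 + Δ * j) * p ^ s) = β := by
      intro j _
      rw [heven' j]; ring
    rw [Finset.prod_congr rfl this, Finset.prod_const, Finset.card_range]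
  have heq : (-β) ^ p = β ^ p := by
    refine tendsto_nhds_unique ?_ htend0
    exact (Filter.Tendsto.congr (fun k => (hexp_eq k)) htend1)
  rw [Odd.neg_pow hpodd] at heq
  have hβp : β ^ p = 0 := by
    have h2 : (2 : ℂ) * β ^ p = 0 := by linear_combination -heq
    have := mul_eq_zero.mp h2
    rcases this with h' | h'
    · norm_num at h'
    · exact h'
  exact pow_ne_zero p hβ0 hβp
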